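/- Let σ be a symmetric trilinear form on ℝⁿ (n ≥ 4) with components σ_{ijk}, H^i := Σ_j σ_{jji}, and R̃_{ijkl} := Σ_m (σ_{ikm}σ_{jlm} - σ_{ilm}σ_{jkm}). Set R̃_{ii} := Σ_k R̃_{ikik}. Then for every orthonormal frame {e₁,...,eₙ}: R̃₁₂₁₂ + R̃₁₂₃₄ ≥ (1/2)(R̃₁₁ + R̃₂₂) + ((n-4)/(2(n-2))) Σ_{i=3}^n R̃_{ii} - ((n-3)/(2(n+2))) Σ_k (H^k)². -/

import Mathlib

namespace Stmt3Aux

variable {n : ℕ}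

def Hv (σ : Fin n → Fin n → Fin n → ℝ) : Fin n → ℝ := fun m => ∑ j, σ j j m

def st (σ : Fin n → Fin n → Fin n → ℝ) (u : ℝ) : Fin n → Fin n → Fin n → ℝ :=
  fun i j k => σ i j k - u * ((if i = j then Hv σ k else 0) + (if j = k then Hv σ i else 0)
    + (if i = k then Hv σ j else 0))

theorem trace2 (σ : Fin n → Fin n → Fin n → ℝ)
    (h1 : ∀ i j k, σ i j k = σ j i k) (h2 : ∀ i j k, σ i j k = σ i k j) (i : Fin n) :
    ∑ k, σ i k k = Hv σ i := by
  unfold Hv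
  refine Finset.sum_congr rfl fun k _ => ?_
  rw [h1, h2]

theorem st_symm (σ : Fin n → Fin n → Fin n → ℝ)
    (h1 : ∀ i j k, σ i j k = σ j i k) (u : ℝ) (i j k : Fin n) :
    st σ u j i k = st σ u i j k := by
  unfold st
  rw [h1 j i k]
  by_cases h : i = j
  · subst h; ring
  · rw [if_neg h, if_neg (Ne.symm h)]; ring

theorem RicEq (σ : Fin n → Fin n → Fin n → ℝ)
    (h1 : ∀ i j k, σ i j k = σ j i k) (i : Fin n) :
    ∑ k, ∑ m, (σ i i m * σ k k m - σ i k m * σ k i m)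
      = (∑ m, σ i i m * Hv σ m) - ∑ k, ∑ m, (σ i k m) ^ 2 := by
  have hk : ∀ k : Fin n, ∑ m, (σ i i m * σ k k m - σ i k m * σ k i m)
      = (∑ m, σ i i m * σ k k m) - ∑ m, (σ i k m) ^ 2 := by
    intro k
    rw [Finset.sum_sub_distrib]
    congr 1
    exact Finset.sum_congr rfl fun m _ => by rw [h1 k i m]; ring
  rw [Finset.sum_congr rfl fun k _ => hk k, Finset.sum_sub_distrib]
  congr 1
  rw [Finset.sum_comm]
  exact Finset.sum_congr rfl fun m _ => by rw [← Finset.mul_sum]; rfl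

theorem sumX (σ : Fin n → Fin n → Fin n → ℝ) :
    ∑ i, ∑ m, σ i i m * Hv σ m = ∑ m, (Hv σ m) ^ 2 := by
  rw [Finset.sum_comm]
  refine Finset.sum_congr rfl fun m _ => ?_
  rw [← Finset.sum_mul]
  show Hv σ m * Hv σ m = _
  ring

theorem sumConst (c : ℝ) : ∑ _i : Fin n, c = (n : ℝ) * c := by
  rw [Finset.sum_const, Finset.card_univ, Fintype.card_fin, nsmul_eq_mul]

theorem G1a (σ : Fin n → Fin n → Fin n → ℝ) (u : ℝ) (a b : Fin n) (hab : a ≠ b) :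
    ∑ m, st σ u a a m * st σ u b b m
      = (∑ m, σ a a m * σ b b m)
        - u * ((∑ m, σ a a m * Hv σ m) + (∑ m, σ b b m * Hv σ m)
            + 2 * σ b b a * Hv σ a + 2 * σ a a b * Hv σ b)
        + u ^ 2 * ((∑ m, (Hv σ m) ^ 2) + 2 * (Hv σ a) ^ 2 + 2 * (Hv σ b) ^ 2) := by
  have pt : ∀ m : Fin n, st σ u a a m * st σ u b b m
      = (σ a a m * σ b b m - u * (σ a a m * Hv σ m) - u * (σ b b m * Hv σ m)
          + u ^ 2 * (Hv σ m) ^ 2)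
        + ((if a = m then -2 * u * Hv σ a * σ b b m + 2 * u ^ 2 * Hv σ a * Hv σ m
              else 0)
        + (if b = m then -2 * u * Hv σ b * σ a a m + 2 * u ^ 2 * Hv σ b * Hv σ m
              else 0)) := by
    intro m
    by_cases ha : a = m <;> by_cases hb : b = m
    · exact absurd (ha.trans hb.symm) hab
    · simp only [st, ha, hb]; simp [Ne.symm hb, fun h : b = a => hab h.symm]; ring
    · simp only [st, ha, hb]; simp [Ne.symm ha, fun h : a = b => hab h]; ring
    · simp only [st]; simp [ha, hb]; ring
  rw [Finset.sum_congr rfl fun m _ => pt m]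
  simp only [Finset.sum_add_distrib, Finset.sum_sub_distrib, Finset.sum_ite_eq,
    Finset.mem_univ, if_true, ← Finset.mul_sum]
  ring

theorem G1b (σ : Fin n → Fin n → Fin n → ℝ) (u : ℝ) (a b : Fin n) (hab : a ≠ b) :
    ∑ m, (st σ u a b m) ^ 2
      = (∑ m, (σ a b m) ^ 2) - 2 * u * (σ a b b * Hv σ a + σ a b a * Hv σ b)
        + u ^ 2 * ((Hv σ a) ^ 2 + (Hv σ b) ^ 2) := by
  have pt : ∀ m : Fin n, (st σ u a b m) ^ 2
      = (σ a b m) ^ 2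
        + (if b = m then -2 * u * Hv σ a * σ a b m + u ^ 2 * (Hv σ a) ^ 2 else 0)
        + (if a = m then -2 * u * Hv σ b * σ a b m + u ^ 2 * (Hv σ b) ^ 2 else 0) := by
    intro m
    by_cases ha : a = m
    · subst ha; simp [st, hab, Ne.symm hab] <;> ring
    by_cases hb : b = m
    · subst hb; simp [st, hab, Ne.symm hab, ha] <;> ring
    · simp [st, ha, hb, hab] <;> ring
  rw [Finset.sum_congr rfl fun m _ => pt m]
  simp only [Finset.sum_add_distrib, Finset.sum_ite_eq, Finset.mem_univ, if_true]
  ring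

theorem G1c (σ : Fin n → Fin n → Fin n → ℝ) (u : ℝ) (a b c d : Fin n)
    (hab : a ≠ b) (hcd : c ≠ d) (hac : a ≠ c) (had : a ≠ d) (hbc : b ≠ c) (hbd : b ≠ d) :
    ∑ m, st σ u a b m * st σ u c d m
      = (∑ m, σ a b m * σ c d m)
        - u * (σ a b d * Hv σ c + σ a b c * Hv σ d + σ c d b * Hv σ a + σ c d a * Hv σ b) := by
  have pt : ∀ m : Fin n, st σ u a b m * st σ u c d m
      = σ a b m * σ c d m
        + (if d = m then -u * Hv σ c * σ a b m else 0)
        + (if c = m then -u * Hv σ d * σ a b m else 0)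
        + (if b = m then -u * Hv σ a * σ c d m else 0)
        + (if a = m then -u * Hv σ b * σ c d m else 0) := by
    intro m
    by_cases ha : a = m
    · subst ha; simp [st, hab, hcd, hac, had, hbc, hbd, Ne.symm hab, Ne.symm hcd,
        Ne.symm hac, Ne.symm had, Ne.symm hbc, Ne.symm hbd] <;> ring
    by_cases hb : b = m
    · subst hb; simp [st, ha, hab, hcd, hac, had, hbc, hbd, Ne.symm hab, Ne.symm hcd,
        Ne.symm hac, Ne.symm had, Ne.symm hbc, Ne.symm hbd] <;> ring
    by_cases hc : c = m
    · subst hc; simp [st, ha, hb, hab, hcd, hac, had, hbc, hbd, Ne.symm hab, Ne.symm hcd,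
        Ne.symm hac, Ne.symm had, Ne.symm hbc, Ne.symm hbd] <;> ring
    by_cases hd : d = m
    · subst hd; simp [st, ha, hb, hc, hab, hcd, hac, had, hbc, hbd, Ne.symm hab, Ne.symm hcd,
        Ne.symm hac, Ne.symm had, Ne.symm hbc, Ne.symm hbd] <;> ring
    · simp [st, ha, hb, hc, hd, hab, hcd] <;> ring
  rw [Finset.sum_congr rfl fun m _ => pt m]
  simp only [Finset.sum_add_distrib, Finset.sum_ite_eq, Finset.mem_univ, if_true]
  ring

theorem G2 (σ : Fin n → Fin n → Fin n → ℝ)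
    (h1 : ∀ i j k, σ i j k = σ j i k) (h2 : ∀ i j k, σ i j k = σ i k j)
    (u : ℝ) (a : Fin n) :
    ∑ k, ∑ m, (st σ u a k m) ^ 2
      = (∑ k, ∑ m, (σ a k m) ^ 2)
        - u * (4 * (∑ m, σ a a m * Hv σ m) + 2 * (Hv σ a) ^ 2)
        + u ^ 2 * (2 * (∑ m, (Hv σ m) ^ 2) + ((n : ℝ) + 6) * (Hv σ a) ^ 2) := by
  have inner : ∀ k : Fin n, ∑ m, (st σ u a k m) ^ 2
      = (∑ m, (σ a k m) ^ 2)
        + (if a = k then -2 * u * (∑ m, σ a k m * Hv σ m) + u ^ 2 * (∑ m, (Hv σ m) ^ 2)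
            + 6 * u ^ 2 * (Hv σ a * Hv σ k) else 0)
        + (-2 * u * (Hv σ a * σ a k k) + u ^ 2 * (Hv σ a) ^ 2)
        + (-2 * u * (Hv σ k * σ a k a) + u ^ 2 * (Hv σ k) ^ 2) := by
    intro k
    by_cases h : a = k
    · subst h
      have pt : ∀ m : Fin n, (st σ u a a m) ^ 2
          = ((σ a a m) ^ 2 - 2 * u * (σ a a m * Hv σ m) + u ^ 2 * (Hv σ m) ^ 2)
            + (if a = m then -4 * u * Hv σ a * σ a a m + 4 * u ^ 2 * Hv σ a * Hv σ m
                + 4 * u ^ 2 * (Hv σ a) ^ 2 else 0) := by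
        intro m
        by_cases ha : a = m
        · subst ha; simp [st] <;> ring
        · simp [st, ha] <;> ring
      rw [Finset.sum_congr rfl fun m _ => pt m]
      simp only [Finset.sum_add_distrib, Finset.sum_sub_distrib, Finset.sum_ite_eq,
        Finset.mem_univ, if_true, ← Finset.mul_sum]
      ring
    · have pt : ∀ m : Fin n, (st σ u a k m) ^ 2
          = (σ a k m) ^ 2
            + (if k = m then -2 * u * Hv σ a * σ a k m + u ^ 2 * (Hv σ a) ^ 2 else 0)
            + (if a = m then -2 * u * Hv σ k * σ a k m + u ^ 2 * (Hv σ k) ^ 2 else 0) := by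
        intro m
        by_cases ha : a = m
        · subst ha; simp [st, h, Ne.symm h] <;> ring
        by_cases hk : k = m
        · subst hk; simp [st, h, ha] <;> ring
        · simp [st, h, ha, hk] <;> ring
      rw [Finset.sum_congr rfl fun m _ => pt m]
      simp only [Finset.sum_add_distrib, Finset.sum_ite_eq, Finset.mem_univ, if_true, if_neg h]
      ring
  rw [Finset.sum_congr rfl fun k _ => inner k]
  have e2 : ∀ k : Fin n, σ a k a = σ a a k := fun k => h2 a k a
  simp only [Finset.sum_add_distrib, Finset.sum_ite_eq, Finset.mem_univ, if_true]
  have hA : ∑ x : Fin n, -2 * u * (Hv σ a * σ a x x) = -2 * u * Hv σ a * Hv σ a := by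
    rw [show ∑ x : Fin n, -2 * u * (Hv σ a * σ a x x)
        = ∑ x : Fin n, (-2 * u * Hv σ a) * σ a x x from
      Finset.sum_congr rfl fun x _ => by ring, ← Finset.mul_sum, trace2 σ h1 h2 a]
  have hB : ∑ _x : Fin n, (u ^ 2 * Hv σ a ^ 2 : ℝ) = (n : ℝ) * (u ^ 2 * Hv σ a ^ 2) := by
    rw [Finset.sum_const, Finset.card_univ, Fintype.card_fin, nsmul_eq_mul]
  have hC : ∑ x : Fin n, -2 * u * (Hv σ x * σ a x a) = -2 * u * ∑ m, σ a a m * Hv σ m := by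
    rw [Finset.mul_sum]
    exact Finset.sum_congr rfl fun x _ => by rw [e2 x]; ring
  have hD : ∑ x : Fin n, u ^ 2 * Hv σ x ^ 2 = u ^ 2 * ∑ m, Hv σ m ^ 2 :=
    (Finset.mul_sum _ _ _).symm
  rw [hA, hB, hC, hD]
  ring

theorem sumS (hn : 4 ≤ n) (a0 a1 : Fin n) (e0 : (a0 : ℕ) = 0) (e1 : (a1 : ℕ) = 1)
    (f : Fin n → ℝ) :
    ∑ i ∈ Finset.univ.filter (fun i : Fin n => 2 ≤ (i : ℕ)), f i
      = (∑ i, f i) - f a0 - f a1 := by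
  have hsplit := Finset.sum_filter_add_sum_filter_not Finset.univ
    (fun i : Fin n => 2 ≤ (i : ℕ)) f
  have hset : Finset.univ.filter (fun i : Fin n => ¬ 2 ≤ (i : ℕ)) = {a0, a1} := by
    ext i
    simp [Fin.ext_iff, e0, e1]
    omega
  rw [hset] at hsplit
  rw [Finset.sum_pair (by rw [Ne, Fin.ext_iff, e0, e1]; omega)] at hsplit
  linarith

theorem posPart (σ : Fin n → Fin n → Fin n → ℝ)
    (h1 : ∀ i j k, σ i j k = σ j i k) (c u : ℝ) (hc : 0 ≤ c)
    (a0 a1 a2 a3 : Fin n) (h01 : a0 ≠ a1) (h02 : a0 ≠ a2) (h03 : a0 ≠ a3)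
    (h12 : a1 ≠ a2) (h13 : a1 ≠ a3) (h23 : a2 ≠ a3) :
    0 ≤ (∑ m, st σ u a0 a0 m * st σ u a1 a1 m) - (∑ m, (st σ u a0 a1 m) ^ 2)
      + (∑ m, st σ u a0 a2 m * st σ u a1 a3 m) - (∑ m, st σ u a0 a3 m * st σ u a1 a2 m)
      + (1 / 2) * ((∑ k, ∑ m, (st σ u a0 k m) ^ 2) + (∑ k, ∑ m, (st σ u a1 k m) ^ 2))
      + c * (∑ i ∈ Finset.univ.filter (fun i : Fin n => 2 ≤ (i : ℕ)),
          ∑ k, ∑ m, (st σ u i k m) ^ 2) := by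
  have hclast : 0 ≤ c * (∑ i ∈ Finset.univ.filter (fun i : Fin n => 2 ≤ (i : ℕ)),
      ∑ k, ∑ m, (st σ u i k m) ^ 2) :=
    mul_nonneg hc (Finset.sum_nonneg fun i _ => Finset.sum_nonneg fun k _ =>
      Finset.sum_nonneg fun m _ => sq_nonneg _)
  have perm : ∀ m : Fin n,
      0 ≤ st σ u a0 a0 m * st σ u a1 a1 m - (st σ u a0 a1 m) ^ 2
        + st σ u a0 a2 m * st σ u a1 a3 m - st σ u a0 a3 m * st σ u a1 a2 m
        + (1 / 2) * (∑ k, (st σ u a0 k m) ^ 2) + (1 / 2) * (∑ k, (st σ u a1 k m) ^ 2) := by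
    intro m
    have hx : ∑ k ∈ ({a0, a1, a2, a3} : Finset (Fin n)), (st σ u a0 k m) ^ 2
        ≤ ∑ k, (st σ u a0 k m) ^ 2 :=
      Finset.sum_le_sum_of_subset_of_nonneg (Finset.subset_univ _)
        (fun i _ _ => sq_nonneg _)
    have hy : ∑ k ∈ ({a0, a1, a2, a3} : Finset (Fin n)), (st σ u a1 k m) ^ 2
        ≤ ∑ k, (st σ u a1 k m) ^ 2 :=
      Finset.sum_le_sum_of_subset_of_nonneg (Finset.subset_univ _)
        (fun i _ _ => sq_nonneg _)
    have hs : ∀ g : Fin n → ℝ, ∑ k ∈ ({a0, a1, a2, a3} : Finset (Fin n)), g k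
        = g a0 + g a1 + g a2 + g a3 := by
      intro g
      rw [Finset.sum_insert (by simp [h01, h02, h03]),
        Finset.sum_insert (by simp [h12, h13]),
        Finset.sum_insert (by simp [h23]), Finset.sum_singleton]
      ring
    rw [hs] at hx hy
    have hsym : st σ u a1 a0 m = st σ u a0 a1 m := st_symm σ h1 u a0 a1 m
    rw [hsym] at hy
    nlinarith [sq_nonneg (st σ u a0 a0 m + st σ u a1 a1 m),
      sq_nonneg (st σ u a0 a2 m + st σ u a1 a3 m),
      sq_nonneg (st σ u a0 a3 m - st σ u a1 a2 m), hx, hy, hsym,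
      sq_nonneg (st σ u a0 a1 m)]
  have hmain := Finset.sum_nonneg fun m (_ : m ∈ Finset.univ) => perm m
  have expand : ∑ m, (st σ u a0 a0 m * st σ u a1 a1 m - (st σ u a0 a1 m) ^ 2
        + st σ u a0 a2 m * st σ u a1 a3 m - st σ u a0 a3 m * st σ u a1 a2 m
        + (1 / 2) * (∑ k, (st σ u a0 k m) ^ 2) + (1 / 2) * (∑ k, (st σ u a1 k m) ^ 2))
      = (∑ m, st σ u a0 a0 m * st σ u a1 a1 m) - (∑ m, (st σ u a0 a1 m) ^ 2)
        + (∑ m, st σ u a0 a2 m * st σ u a1 a3 m) - (∑ m, st σ u a0 a3 m * st σ u a1 a2 m)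
        + (1 / 2) * ((∑ m, ∑ k, (st σ u a0 k m) ^ 2) + (∑ m, ∑ k, (st σ u a1 k m) ^ 2)) := by
    simp only [Finset.sum_add_distrib, Finset.sum_sub_distrib, ← Finset.mul_sum]
    ring
  rw [expand] at hmain
  rw [show ∑ k, ∑ m, (st σ u a0 k m) ^ 2 = ∑ m, ∑ k, (st σ u a0 k m) ^ 2 from
    Finset.sum_comm, show ∑ k, ∑ m, (st σ u a1 k m) ^ 2 = ∑ m, ∑ k, (st σ u a1 k m) ^ 2 from
    Finset.sum_comm]
  linarith

theorem main_ineq {n : ℕ} (hn : 4 ≤ n) (σ : Fin n → Fin n → Fin n → ℝ)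
    (h1 : ∀ i j k, σ i j k = σ j i k) (h2 : ∀ i j k, σ i j k = σ i k j)
    (a0 a1 a2 a3 : Fin n) (e0 : (a0 : ℕ) = 0) (e1 : (a1 : ℕ) = 1)
    (e2 : (a2 : ℕ) = 2) (e3 : (a3 : ℕ) = 3) :
    (1 / 2 : ℝ) * ((∑ k, ∑ m, (σ a0 a0 m * σ k k m - σ a0 k m * σ k a0 m))
        + (∑ k, ∑ m, (σ a1 a1 m * σ k k m - σ a1 k m * σ k a1 m)))
      + (((n : ℝ) - 4) / (2 * ((n : ℝ) - 2)))
          * ∑ i ∈ Finset.univ.filter (fun i : Fin n => 2 ≤ (i : ℕ)),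
              ∑ k, ∑ m, (σ i i m * σ k k m - σ i k m * σ k i m)
      - (((n : ℝ) - 3) / (2 * ((n : ℝ) + 2))) * ∑ m, (Hv σ m) ^ 2
      ≤ (∑ m, (σ a0 a0 m * σ a1 a1 m - σ a0 a1 m * σ a1 a0 m))
        + (∑ m, (σ a0 a2 m * σ a1 a3 m - σ a0 a3 m * σ a1 a2 m)) := by
  have hn4R : (4 : ℝ) ≤ (n : ℝ) := by exact_mod_cast hn
  have h01 : a0 ≠ a1 := by rw [Ne, Fin.ext_iff]; omega
  have h02 : a0 ≠ a2 := by rw [Ne, Fin.ext_iff]; omega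
  have h03 : a0 ≠ a3 := by rw [Ne, Fin.ext_iff]; omega
  have h12 : a1 ≠ a2 := by rw [Ne, Fin.ext_iff]; omega
  have h13 : a1 ≠ a3 := by rw [Ne, Fin.ext_iff]; omega
  have h23 : a2 ≠ a3 := by rw [Ne, Fin.ext_iff]; omega
  set u : ℝ := 1 / ((n : ℝ) + 2) with hu
  set c : ℝ := ((n : ℝ) - 4) / (2 * ((n : ℝ) - 2)) with hc_def
  have hc : 0 ≤ c := by
    rw [hc_def]
    apply div_nonneg <;> linarith
  have hpos := posPart σ h1 c u hc a0 a1 a2 a3 h01 h02 h03 h12 h13 h23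
  -- point-value symmetries
  have p1 : σ a1 a1 a0 = σ a0 a1 a1 := by rw [h2 a1 a1 a0, h1 a1 a0 a1]
  have p2 : σ a0 a1 a0 = σ a0 a0 a1 := h2 a0 a1 a0
  have p3 : σ a0 a3 a2 = σ a0 a2 a3 := h2 a0 a3 a2
  have p4 : σ a1 a3 a2 = σ a1 a2 a3 := h2 a1 a3 a2
  have p5 : σ a0 a2 a1 = σ a0 a1 a2 := h2 a0 a2 a1
  have p6 : σ a1 a2 a0 = σ a0 a1 a2 := by
    rw [h1 a1 a2 a0, h2 a2 a1 a0, h1 a2 a0 a1, h2 a0 a2 a1]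
  have p7 : σ a0 a3 a1 = σ a0 a1 a3 := h2 a0 a3 a1
  have p8 : σ a1 a3 a0 = σ a0 a1 a3 := by
    rw [h1 a1 a3 a0, h2 a3 a1 a0, h1 a3 a0 a1, h2 a0 a3 a1]
  -- helpers for the Rt side
  have hRB : ∑ m, σ a0 a1 m * σ a1 a0 m = ∑ m, (σ a0 a1 m) ^ 2 :=
    Finset.sum_congr rfl fun m _ => by rw [h1 a1 a0 m]; ring
  have hsplitR1 : ∑ m, (σ a0 a0 m * σ a1 a1 m - σ a0 a1 m * σ a1 a0 m)
      = (∑ m, σ a0 a0 m * σ a1 a1 m) - (∑ m, (σ a0 a1 m) ^ 2) := by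
    rw [Finset.sum_sub_distrib, hRB]
  have hsplitR2 : ∑ m, (σ a0 a2 m * σ a1 a3 m - σ a0 a3 m * σ a1 a2 m)
      = (∑ m, σ a0 a2 m * σ a1 a3 m) - (∑ m, σ a0 a3 m * σ a1 a2 m) :=
    Finset.sum_sub_distrib _ _
  -- Ricci sums over the filter set
  have hRicS : ∑ i ∈ Finset.univ.filter (fun i : Fin n => 2 ≤ (i : ℕ)),
        ∑ k, ∑ m, (σ i i m * σ k k m - σ i k m * σ k i m)
      = ((∑ m, (Hv σ m) ^ 2) - (∑ i, ∑ k, ∑ m, (σ i k m) ^ 2))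
        - ((∑ m, σ a0 a0 m * Hv σ m) - ∑ k, ∑ m, (σ a0 k m) ^ 2)
        - ((∑ m, σ a1 a1 m * Hv σ m) - ∑ k, ∑ m, (σ a1 k m) ^ 2) := by
    rw [Finset.sum_congr rfl fun i _ => RicEq σ h1 i, sumS hn a0 a1 e0 e1,
      Finset.sum_sub_distrib, sumX σ]
  -- sum over the filter set of the traceless double sums
  have hG2' : ∀ i : Fin n, ∑ k, ∑ m, (st σ u i k m) ^ 2
      = (∑ k, ∑ m, (σ i k m) ^ 2) + (-4 * u) * (∑ m, σ i i m * Hv σ m)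
        + (-2 * u) * (Hv σ i) ^ 2 + (2 * u ^ 2) * (∑ m, (Hv σ m) ^ 2)
        + (((n : ℝ) + 6) * u ^ 2) * (Hv σ i) ^ 2 :=
    fun i => by rw [G2 σ h1 h2 u i]; ring
  have hSplitStS : ∑ i ∈ Finset.univ.filter (fun i : Fin n => 2 ≤ (i : ℕ)),
        ∑ k, ∑ m, (st σ u i k m) ^ 2
      = ((∑ i, ∑ k, ∑ m, (σ i k m) ^ 2) + (-4 * u) * (∑ m, (Hv σ m) ^ 2)
          + (-2 * u) * (∑ m, (Hv σ m) ^ 2)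
          + (2 * u ^ 2) * ((n : ℝ) * (∑ m, (Hv σ m) ^ 2))
          + (((n : ℝ) + 6) * u ^ 2) * (∑ m, (Hv σ m) ^ 2))
        - ((∑ k, ∑ m, (σ a0 k m) ^ 2) + (-4 * u) * (∑ m, σ a0 a0 m * Hv σ m)
          + (-2 * u) * (Hv σ a0) ^ 2 + (2 * u ^ 2) * (∑ m, (Hv σ m) ^ 2)
          + (((n : ℝ) + 6) * u ^ 2) * (Hv σ a0) ^ 2)
        - ((∑ k, ∑ m, (σ a1 k m) ^ 2) + (-4 * u) * (∑ m, σ a1 a1 m * Hv σ m)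
          + (-2 * u) * (Hv σ a1) ^ 2 + (2 * u ^ 2) * (∑ m, (Hv σ m) ^ 2)
          + (((n : ℝ) + 6) * u ^ 2) * (Hv σ a1) ^ 2) := by
    rw [Finset.sum_congr rfl fun i _ => hG2' i, sumS hn a0 a1 e0 e1]
    congr 2
    simp only [Finset.sum_add_distrib, ← Finset.mul_sum]
    rw [sumX σ, sumConst]
  -- the G-lemma instances
  have hA := G1a σ u a0 a1 h01
  have hB := G1b σ u a0 a1 h01
  have hC := G1c σ u a0 a2 a1 a3 h02 h13 h01 h03 (Ne.symm h12) h23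
  have hD := G1c σ u a0 a3 a1 a2 h03 h12 h01 h02 (Ne.symm h13) (Ne.symm h23)
  have hQ0 := G2 σ h1 h2 u a0
  have hQ1 := G2 σ h1 h2 u a1
  have hne2 : (n : ℝ) - 2 ≠ 0 := by linarith
  have hne2' : (n : ℝ) + 2 ≠ 0 := by linarith
  have hfinal : ((∑ m, (σ a0 a0 m * σ a1 a1 m - σ a0 a1 m * σ a1 a0 m))
        + (∑ m, (σ a0 a2 m * σ a1 a3 m - σ a0 a3 m * σ a1 a2 m)))
      - ((1 / 2 : ℝ) * ((∑ k, ∑ m, (σ a0 a0 m * σ k k m - σ a0 k m * σ k a0 m))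
          + (∑ k, ∑ m, (σ a1 a1 m * σ k k m - σ a1 k m * σ k a1 m)))
        + c * ∑ i ∈ Finset.univ.filter (fun i : Fin n => 2 ≤ (i : ℕ)),
              ∑ k, ∑ m, (σ i i m * σ k k m - σ i k m * σ k i m)
        - (((n : ℝ) - 3) / (2 * ((n : ℝ) + 2))) * ∑ m, (Hv σ m) ^ 2)
      = (∑ m, st σ u a0 a0 m * st σ u a1 a1 m) - (∑ m, (st σ u a0 a1 m) ^ 2)
        + (∑ m, st σ u a0 a2 m * st σ u a1 a3 m) - (∑ m, st σ u a0 a3 m * st σ u a1 a2 m)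
        + (1 / 2) * ((∑ k, ∑ m, (st σ u a0 k m) ^ 2) + (∑ k, ∑ m, (st σ u a1 k m) ^ 2))
        + c * (∑ i ∈ Finset.univ.filter (fun i : Fin n => 2 ≤ (i : ℕ)),
            ∑ k, ∑ m, (st σ u i k m) ^ 2) := by
    rw [hsplitR1, hsplitR2, RicEq σ h1 a0, RicEq σ h1 a1, hRicS,
      hA, hB, hC, hD, hQ0, hQ1, hSplitStS, p1, p2, p3, p4, p5, p6, p7, p8,
      hu, hc_def]
    field_simp
    ring
  linarith [hpos, hfinal]

end Stmt3Aux

open scoped RealInnerProductSpace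

/-- Lemma 3.6: for a symmetric trilinear form `σ` on `ℝⁿ` (`n ≥ 4`), with Ricci traces
`R̃_ii = Σ_k R̃_ikik`, one has
`R̃₁₂₁₂ + R̃₁₂₃₄ ≥ (1/2)(R̃₁₁+R̃₂₂) + ((n-4)/(2(n-2))) Σ_{i=3}^n R̃_ii
  - ((n-3)/(2(n+2))) Σ (Hᵏ)²`. -/
theorem stmt_3 {n : ℕ} (hn : 4 ≤ n)
    (T : EuclideanSpace ℝ (Fin n) →ₗ[ℝ] EuclideanSpace ℝ (Fin n) →ₗ[ℝ]
      EuclideanSpace ℝ (Fin n) →ₗ[ℝ] ℝ)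
    (hT1 : ∀ x y z, T x y z = T y x z)
    (hT2 : ∀ x y z, T x y z = T x z y)
    (e : Fin n → EuclideanSpace ℝ (Fin n)) (he : Orthonormal ℝ e) :
    let σ : Fin n → Fin n → Fin n → ℝ := fun i j k => T (e i) (e j) (e k)
    let H : Fin n → ℝ := fun i => ∑ j, σ j j i
    let Rt : Fin n → Fin n → Fin n → Fin n → ℝ :=
      fun i j k l => ∑ m, (σ i k m * σ j l m - σ i l m * σ j k m)
    let Ric : Fin n → ℝ := fun i => ∑ k, Rt i k i k
    let i₁ : Fin n := ⟨0, by omega⟩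
    let i₂ : Fin n := ⟨1, by omega⟩
    (1 / 2 : ℝ) * (Ric i₁ + Ric i₂)
      + (((n : ℝ) - 4) / (2 * ((n : ℝ) - 2)))
          * ∑ i ∈ Finset.univ.filter (fun i : Fin n => 2 ≤ (i : ℕ)), Ric i
      - (((n : ℝ) - 3) / (2 * ((n : ℝ) + 2))) * ∑ k, (H k) ^ 2
      ≤ Rt i₁ i₂ i₁ i₂ + Rt i₁ i₂ ⟨2, by omega⟩ ⟨3, by omega⟩ := by
  exact Stmt3Aux.main_ineq hn (fun i j k => T (e i) (e j) (e k))
    (fun i j k => hT1 (e i) (e j) (e k)) (fun i j k => hT2 (e i) (e j) (e k))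
    ⟨0, by omega⟩ ⟨1, by omega⟩ ⟨2, by omega⟩ ⟨3, by omega⟩ rfl rfl rfl rfl
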